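/- For each integer n ≥ 0, set k_n = 1/(2^{n+2} − 2) and l_n = (2^{n+2} − n − 3)/(2^{n+2} − 2), and set (k_{−1}, l_{−1}) = (1, 0). Let α ∈ (0,1) with l_{n−1}/(k_{n−1}+1) ≤ α < l_n/(k_n+1) for some n ≥ 0. Then the real number B_2 = (l_n/(k_n+1) − α) / (l_n/(k_n+1) − α + 1/(k_n+1)) satisfies B_2 ≤ (n + 2^{−n−1})/(n + 2^{n+2} + 3·2^{−n−1} − 4). -/

import Mathlib

private lemma B2_mono {x y c : ℝ} (hc : 0 < c) (hx : 0 ≤ x) (hxy : x ≤ y) :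
    x / (x + c) ≤ y / (y + c) := by
  rw [div_le_div_iff₀ (by linarith) (by linarith)]
  nlinarith

private lemma B2_aux_frac (b t : ℝ) (h2 : b - 2 ≠ 0) (h1 : b - 1 ≠ 0) :
    ((b - t - 3) / (b - 2)) / (1 / (b - 2) + 1) = (b - t - 3) / (b - 1) := by
  have : 1 / (b - 2) + 1 = (b - 1) / (b - 2) := by field_simp; ring
  rw [this, div_div_div_cancel_right₀ h2]

private lemma B2_aux_c (b : ℝ) (h2 : b - 2 ≠ 0) (h1 : b - 1 ≠ 0) :
    1 / (1 / (b - 2) + 1) = (b - 2) / (b - 1) := by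
  have : 1 / (b - 2) + 1 = (b - 1) / (b - 2) := by field_simp; ring
  rw [this, one_div_div]

private lemma B2_aux_rhs (t a : ℝ) (ha : a ≠ 0)
    (h1 : t + 2 * a + 3 * a⁻¹ - 4 ≠ 0) (h2 : t * a + 2 * a ^ 2 - 4 * a + 3 ≠ 0) :
    (t + a⁻¹) / (t + 2 * a + 3 * a⁻¹ - 4)
      = (t * a + 1) / (t * a + 2 * a ^ 2 - 4 * a + 3) := by
  rw [div_eq_div_iff h1 h2]
  field_simp
  all_goals try ring
  all_goals exact Or.inl trivial

/-- With `k_n = 1/(2^{n+2}-2)`, `l_n = (2^{n+2}-n-3)/(2^{n+2}-2)` and the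
    convention `l_{-1}/(k_{-1}+1) = 0`, if `α ∈ (0,1)` lies in the interval
    `[l_{n-1}/(k_{n-1}+1), l_n/(k_n+1))`, then
    `B₂ = (l_n/(k_n+1) - α)/(l_n/(k_n+1) - α + 1/(k_n+1))` satisfies
    `B₂ ≤ (n+2^{-n-1})/(n+2^{n+2}+3·2^{-n-1}-4)`. -/
theorem B2_upper_bound (k l : ℕ → ℝ)
    (hk : ∀ m : ℕ, k m = 1 / (2 ^ (m + 2) - 2))
    (hl : ∀ m : ℕ, l m = (2 ^ (m + 2) - (m : ℝ) - 3) / (2 ^ (m + 2) - 2))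
    (n : ℕ) (α : ℝ) (hα0 : 0 < α) (hα1 : α < 1)
    (hlow : (if n = 0 then (0 : ℝ) else l (n - 1) / (k (n - 1) + 1)) ≤ α)
    (hup : α < l n / (k n + 1)) :
    (l n / (k n + 1) - α) / (l n / (k n + 1) - α + 1 / (k n + 1))
      ≤ ((n : ℝ) + (2 : ℝ) ^ (-(n : ℤ) - 1)) /
          ((n : ℝ) + 2 ^ (n + 2) + 3 * (2 : ℝ) ^ (-(n : ℤ) - 1) - 4) := by
  set a : ℝ := 2 ^ (n + 1) with ha
  have ha2 : (2 : ℝ) ≤ a := by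
    rw [ha]
    calc (2 : ℝ) = 2 ^ 1 := by norm_num
    _ ≤ 2 ^ (n + 1) := by
      apply pow_le_pow_right₀ (by norm_num) (by omega)
  have hA : (2 : ℝ) ^ (n + 2) = 2 * a := by
    rw [ha, pow_succ]; ring
  have hzpow : (2 : ℝ) ^ (-(n : ℤ) - 1) = a⁻¹ := by
    rw [show (-(n : ℤ) - 1) = -((n + 1 : ℕ) : ℤ) by push_cast; ring,
      zpow_neg, zpow_natCast, ha]
  have ha0 : (0 : ℝ) < a := by linarith
  have h2a2 : (0 : ℝ) < 2 * a - 2 := by linarith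
  have h2a1 : (0 : ℝ) < 2 * a - 1 := by linarith
  have hnea : (a : ℝ) ≠ 0 := ne_of_gt ha0
  -- values of L and c
  have hL : l n / (k n + 1) = (2 * a - n - 3) / (2 * a - 1) := by
    rw [hl, hk, hA]
    exact B2_aux_frac (2 * a) (n : ℝ) (by intro h; nlinarith) (ne_of_gt h2a1)
  have hc : 1 / (k n + 1) = (2 * a - 2) / (2 * a - 1) := by
    rw [hk, hA]
    have := B2_aux_c (2 * a) (by intro h; nlinarith) (ne_of_gt h2a1)
    rw [this]
  have hcpos : 0 < (2 * a - 2) / (2 * a - 1) := by positivity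
  -- rewrite the RHS
  have hQ : (0 : ℝ) < (n : ℝ) * a + 2 * a ^ 2 - 4 * a + 3 := by
    have : (0 : ℝ) ≤ (n : ℝ) := Nat.cast_nonneg n
    nlinarith
  have hRden : (0 : ℝ) < (n : ℝ) + 2 * a + 3 * a⁻¹ - 4 := by
    have h1 : (0 : ℝ) < a⁻¹ := by positivity
    have : (0 : ℝ) ≤ (n : ℝ) := Nat.cast_nonneg n
    nlinarith
  have hRHS : ((n : ℝ) + (2 : ℝ) ^ (-(n : ℤ) - 1)) /
      ((n : ℝ) + 2 ^ (n + 2) + 3 * (2 : ℝ) ^ (-(n : ℤ) - 1) - 4)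
      = ((n : ℝ) * a + 1) / ((n : ℝ) * a + 2 * a ^ 2 - 4 * a + 3) := by
    rw [hA, hzpow]
    exact B2_aux_rhs (n : ℝ) a hnea hRden.ne' hQ.ne'
  rw [hRHS, hL, hc]
  rcases Nat.eq_zero_or_pos n with hn | hn
  · -- n = 0 : a = 2, everything numeric
    subst hn
    have ha' : a = 2 := by rw [ha]; norm_num
    have hup' : α < 1 / 3 := by
      rw [hL, ha'] at hup; norm_num at hup; linarith
    have h1 : (2 * a - ((0 : ℕ) : ℝ) - 3) / (2 * a - 1) = 1 / 3 := by
      rw [ha']; norm_num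
    have h2 : (2 * a - 2) / (2 * a - 1) = 2 / 3 := by rw [ha']; norm_num
    have h3 : (((0 : ℕ) : ℝ) * a + 1) / (((0 : ℕ) : ℝ) * a + 2 * a ^ 2 - 4 * a + 3)
        = 1 / 3 := by rw [ha']; norm_num
    rw [h1, h2, h3]
    calc (1 / 3 - α) / (1 / 3 - α + 2 / 3)
        ≤ (1 / 3) / (1 / 3 + 2 / 3) :=
          B2_mono (by norm_num) (by linarith) (by linarith)
      _ = 1 / 3 := by norm_num
  · -- n ≥ 1
    have hn0 : n ≠ 0 := by omega
    rw [if_neg hn0] at hlow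
    have hcast : ((n - 1 : ℕ) : ℝ) = (n : ℝ) - 1 := by
      have := Nat.cast_sub (by omega : 1 ≤ n) (R := ℝ); simpa using this
    have hidx : n - 1 + 2 = n + 1 := by omega
    have ha4 : (4 : ℝ) ≤ a := by
      rw [ha]
      calc (4 : ℝ) = 2 ^ 2 := by norm_num
      _ ≤ 2 ^ (n + 1) := by apply pow_le_pow_right₀ (by norm_num) (by omega)
    have ha1 : (0 : ℝ) < a - 1 := by linarith
    have hne3 : (a - 1 : ℝ) ≠ 0 := ne_of_gt ha1
    have hnea2 : (a - 2 : ℝ) ≠ 0 := by intro h; nlinarith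
    have hP : l (n - 1) / (k (n - 1) + 1) = (a - n - 2) / (a - 1) := by
      rw [hl, hk, hidx, hcast, ← ha]
      rw [B2_aux_frac a ((n : ℝ) - 1) hnea2 hne3]
      rw [show a - ((n : ℝ) - 1) - 3 = a - n - 2 by ring]
    rw [hP] at hlow
    -- monotonicity step
    have hx0 : (0 : ℝ) ≤ (2 * a - n - 3) / (2 * a - 1) - α := by
      rw [hL] at hup; linarith
    have hD : ((2 * a - 1) * (a - 1) : ℝ) ≠ 0 := by positivity
    have hy : (2 * a - n - 3) / (2 * a - 1) - (a - n - 2) / (a - 1)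
        = ((n : ℝ) * a + 1) / ((2 * a - 1) * (a - 1)) := by
      rw [div_sub_div _ _ (ne_of_gt h2a1) hne3, div_eq_div_iff hD hD]
      ring
    have key : ((2 * a - n - 3) / (2 * a - 1) - (a - n - 2) / (a - 1)) /
        ((2 * a - n - 3) / (2 * a - 1) - (a - n - 2) / (a - 1) + (2 * a - 2) / (2 * a - 1))
        = ((n : ℝ) * a + 1) / ((n : ℝ) * a + 2 * a ^ 2 - 4 * a + 3) := by
      rw [hy]
      have hc' : (2 * a - 2) / (2 * a - 1)
          = (2 * (a - 1) ^ 2) / ((2 * a - 1) * (a - 1)) := by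
        rw [div_eq_div_iff (ne_of_gt h2a1) hD]
        ring
      rw [hc', ← add_div, div_div_div_cancel_right₀ hD]
      congr 1
      ring
    calc ((2 * a - n - 3) / (2 * a - 1) - α) /
          ((2 * a - n - 3) / (2 * a - 1) - α + (2 * a - 2) / (2 * a - 1))
        ≤ ((2 * a - n - 3) / (2 * a - 1) - (a - n - 2) / (a - 1)) /
          ((2 * a - n - 3) / (2 * a - 1) - (a - n - 2) / (a - 1) + (2 * a - 2) / (2 * a - 1)) :=
          B2_mono hcpos hx0 (by linarith)
      _ = _ := key
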